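/- Let V be a nonzero finite-dimensional real vector space, φ : V → V a linear map, B : V × V → ℝ a bilinear form, and d ≥ 0 a real number such that B(φ(x), φ(y)) = d·B(x, y) for all x, y ∈ V. Suppose L ∈ V satisfies φ(L) = ρ(φ)·L, where ρ(φ) is the spectral radius of φ, and suppose there exists w ∈ V with B(L, w) ≠ 0. Then d ≤ ρ(φ)². (Abstract core of Lemma 2.9 of the paper, which bounds the degree of a surjective endomorphism of a normal projective surface by the square of the spectral radius of its pullback action on divisors.) -/

import Mathlib

/-- The spectral radius of a linear endomorphism of a finite-dimensional real vector
space: the maximum of `|μ|` over the complex roots `μ` of its characteristic polynomial. -/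
noncomputable def realSpectralRadius {V : Type*} [AddCommGroup V] [Module ℝ V]
    [FiniteDimensional ℝ V] (φ : V →ₗ[ℝ] V) : ℝ :=
  sSup {r : ℝ | ∃ μ : ℂ, (φ.charpoly.map (algebraMap ℝ ℂ)).IsRoot μ ∧ ‖μ‖ = r}

section Aux
open Polynomial Matrix


lemma Matrix.charpoly_transpose' {n R : Type*} [Fintype n] [DecidableEq n] [CommRing R]
    (M : Matrix n n R) : Mᵀ.charpoly = M.charpoly := by
  rw [Matrix.charpoly, Matrix.charpoly, ← Matrix.det_transpose (charmatrix Mᵀ)]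
  congr 1
  ext i j
  by_cases h : i = j
  · subst h; simp [charmatrix_apply_eq]
  · simp [charmatrix_apply_ne _ _ _ h, charmatrix_apply_ne _ _ _ (Ne.symm h)]

lemma charpoly_dual_transpose {V : Type*} [AddCommGroup V] [Module ℝ V]
    [FiniteDimensional ℝ V] (φ : V →ₗ[ℝ] V) :
    (Module.Dual.transpose (R := ℝ) φ).charpoly = φ.charpoly := by
  let b := Module.finBasis ℝ V
  rw [← LinearMap.charpoly_toMatrix (Module.Dual.transpose (R := ℝ) φ) b.dualBasis,
    LinearMap.toMatrix_transpose, Matrix.charpoly_transpose',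
    LinearMap.charpoly_toMatrix]

lemma abs_le_spectralRadius {V : Type*} [AddCommGroup V] [Module ℝ V]
    [FiniteDimensional ℝ V] {W : Type*} [AddCommGroup W] [Module ℝ W]
    [FiniteDimensional ℝ W] (φ : V →ₗ[ℝ] V) (ψ : W →ₗ[ℝ] W) (h : ψ.charpoly = φ.charpoly)
    (μ : ℝ) (v : W) (hv : v ≠ 0) (hev : ψ v = μ • v) :
    |μ| ≤ realSpectralRadius φ := by
  have hE : (Module.End.HasEigenvalue ψ μ) :=
    Module.End.hasEigenvalue_of_hasEigenvector
      ⟨Module.End.mem_eigenspace_iff.2 hev, hv⟩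
  have hmin : (minpoly ℝ ψ).IsRoot μ := Module.End.hasEigenvalue_iff_isRoot.1 hE
  have hchar : ψ.charpoly.IsRoot μ := by
    obtain ⟨q, hq⟩ := LinearMap.minpoly_dvd_charpoly ψ
    simp [IsRoot, hq, show eval μ (minpoly ℝ ψ) = 0 from hmin]
  rw [h] at hchar
  have hroot : (φ.charpoly.map (algebraMap ℝ ℂ)).IsRoot ((algebraMap ℝ ℂ) μ) := by
    rw [IsRoot, eval_map, eval₂_at_apply, show eval μ φ.charpoly = 0 from hchar, map_zero]
  have hbdd : BddAbove {r : ℝ | ∃ μ : ℂ,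
      (φ.charpoly.map (algebraMap ℝ ℂ)).IsRoot μ ∧ ‖μ‖ = r} := by
    have hne : φ.charpoly.map (algebraMap ℝ ℂ) ≠ 0 :=
      (φ.charpoly_monic.map _).ne_zero
    have : {r : ℝ | ∃ μ : ℂ, (φ.charpoly.map (algebraMap ℝ ℂ)).IsRoot μ ∧ ‖μ‖ = r}
        = (norm : ℂ → ℝ) '' {μ | (φ.charpoly.map (algebraMap ℝ ℂ)).IsRoot μ} := by
      ext r; simp [Set.mem_image, eq_comm]
    rw [this]
    exact ((Polynomial.finite_setOf_isRoot hne).image _).bddAbove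
  rw [realSpectralRadius]
  exact le_csSup hbdd ⟨(algebraMap ℝ ℂ) μ, hroot, by simp⟩

end Aux

/-- Abstract core of Lemma 2.9: if a bilinear form `B` transforms under `φ` by a factor
`d ≥ 0`, and `L` is an eigenvector of `φ` for the spectral radius with `B L w ≠ 0` for
some `w`, then `d ≤ ρ(φ)²`. -/

theorem degree_le_spectralRadius_sq
    {V : Type*} [AddCommGroup V] [Module ℝ V] [FiniteDimensional ℝ V] [Nontrivial V]
    (φ : V →ₗ[ℝ] V) (B : V →ₗ[ℝ] V →ₗ[ℝ] ℝ) (d : ℝ) (hd : 0 ≤ d)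
    (hB : ∀ x y : V, B (φ x) (φ y) = d * B x y)
    (L : V) (hL : φ L = realSpectralRadius φ • L)
    (hw : ∃ w : V, B L w ≠ 0) :
    d ≤ (realSpectralRadius φ) ^ 2 := by
  obtain ⟨w, hw⟩ := hw
  set ρ := realSpectralRadius φ with hρdef
  have hL0 : L ≠ 0 := by rintro rfl; simp at hw
  have hρ_abs : |ρ| ≤ ρ := abs_le_spectralRadius φ φ rfl ρ L hL0 hL
  have hρ0 : 0 ≤ ρ := (abs_nonneg ρ).trans hρ_abs
  rcases hρ0.eq_or_lt with h0 | hpos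
  · have hφL : φ L = 0 := by rw [hL, ← h0, zero_smul]
    have hd0 : d * B L w = 0 := by rw [← hB L w, hφL]; simp
    have hd' : d = 0 := by
      rcases mul_eq_zero.1 hd0 with h | h
      · exact h
      · exact absurd h hw
    rw [hd', ← h0]
    norm_num
  · have key : Module.Dual.transpose (R := ℝ) φ (B L) = (d / ρ) • (B L) := by
      ext y
      have h1 := hB L y
      rw [hL] at h1
      simp only [_root_.map_smul, LinearMap.smul_apply, smul_eq_mul] at h1
      simp only [Module.Dual.transpose_apply, LinearMap.comp_apply,
        LinearMap.smul_apply, smul_eq_mul]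
      field_simp
      linarith
    have hf0 : (B L) ≠ 0 := fun h => hw (by simp [h])
    have habs := abs_le_spectralRadius φ (Module.Dual.transpose (R := ℝ) φ)
      (charpoly_dual_transpose φ) (d / ρ) (B L) hf0 key
    have hdρ : d / ρ ≤ ρ := le_trans (le_abs_self _) habs
    calc d = (d / ρ) * ρ := by field_simp
    _ ≤ ρ * ρ := mul_le_mul_of_nonneg_right hdρ hρ0
    _ = ρ ^ 2 := (sq ρ).symm
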